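/- Hardy–Poincaré inequality for weakly degenerate weights: let a satisfy the weak degeneracy hypotheses (a(0)=0, a>0 on (0,1], a'≥0, x a'(x) ≤ K a(x) with K ∈ [0,1)). Then there exists C > 0 such that for every w ∈ C¹([0,1]) with w(0) = 0, ∫₀¹ (a(x)/x²) w(x)² dx ≤ C ∫₀¹ a(x) w'(x)² dx. -/

import Mathlib

open Real Set intervalIntegral MeasureTheory Filter

/-- Hardy–Poincaré inequality for weakly degenerate weights: there exists `C > 0`
such that for every `w ∈ C¹([0,1])` with `w(0) = 0`,
`∫₀¹ (a(x)/x²) w(x)² dx ≤ C ∫₀¹ a(x) w'(x)² dx`. -/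
theorem stmt_9 (a a' : ℝ → ℝ) (K : ℝ)
    (hK0 : 0 ≤ K) (hK1 : K < 1)
    (ha_cont : ContinuousOn a (Icc 0 1))
    (ha_deriv : ∀ x ∈ Ioc (0:ℝ) 1, HasDerivAt a (a' x) x)
    (ha'_cont : ContinuousOn a' (Ioc 0 1))
    (ha0 : a 0 = 0)
    (ha_pos : ∀ x ∈ Ioc (0:ℝ) 1, 0 < a x)
    (ha'_nonneg : ∀ x ∈ Ioc (0:ℝ) 1, 0 ≤ a' x)
    (hKa : ∀ x ∈ Ioc (0:ℝ) 1, x * a' x ≤ K * a x) :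
    ∃ C > 0, ∀ w : ℝ → ℝ, ContDiffOn ℝ 1 w (Icc 0 1) → w 0 = 0 →
      ∫ x in (0:ℝ)..1, (a x / x ^ 2) * (w x) ^ 2
        ≤ C * ∫ x in (0:ℝ)..1, a x * (deriv w x) ^ 2 := by
  set δ : ℝ := (1 - K) / 2 with hδdef
  have hδ : 0 < δ := by
    have h1 : (0:ℝ) < 1 - K := by linarith
    positivity
  have hδne : δ ≠ 0 := hδ.ne'
  clear_value δ
  refine ⟨δ⁻¹ ^ 2, by positivity, ?_⟩
  intro w hw hw0
  set g : ℝ → ℝ := derivWithin w (Icc (0:ℝ) 1) with hgdef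
  have hUD : UniqueDiffOn ℝ (Icc (0:ℝ) 1) := uniqueDiffOn_Icc one_pos
  have hgc : ContinuousOn g (Icc 0 1) := hw.continuousOn_derivWithin hUD le_rfl
  have hwc : ContinuousOn w (Icc 0 1) := hw.continuousOn
  have hanng : ∀ x ∈ Icc (0:ℝ) 1, 0 ≤ a x := by
    intro x hx
    rcases eq_or_lt_of_le hx.1 with h | h
    · simp [← h, ha0]
    · exact (ha_pos x ⟨h, hx.2⟩).le
  have hwd : ∀ x ∈ Ioo (0:ℝ) 1, HasDerivAt w (g x) x := by
    intro x hx
    have h1 : DifferentiableWithinAt ℝ w (Icc 0 1) x :=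
      (hw.differentiableOn one_ne_zero) x (Ioo_subset_Icc_self hx)
    exact h1.hasDerivWithinAt.hasDerivAt (Icc_mem_nhds hx.1 hx.2)
  have hderiv_eq : ∀ x ∈ Ioo (0:ℝ) 1, deriv w x = g x := fun x hx => (hwd x hx).deriv
  clear_value g
  obtain ⟨M, hM⟩ := isCompact_Icc.exists_bound_of_continuousOn hgc
  obtain ⟨A, hA⟩ := isCompact_Icc.exists_bound_of_continuousOn ha_cont
  have hM0 : 0 ≤ M := le_trans (norm_nonneg _) (hM 0 (by norm_num))
  have hA0 : 0 ≤ A := le_trans (norm_nonneg _) (hA 0 (by norm_num))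
  -- |w x| ≤ M x
  have hwb : ∀ x ∈ Icc (0:ℝ) 1, |w x| ≤ M * x := by
    intro x hx
    have hsub : Icc (0:ℝ) x ⊆ Icc 0 1 := Icc_subset_Icc le_rfl hx.2
    have key : ∫ t in (0:ℝ)..x, g t = w x - w 0 := by
      apply intervalIntegral.integral_eq_sub_of_hasDeriv_right_of_le hx.1
        (hwc.mono hsub)
        (fun t ht => (hwd t ⟨ht.1, lt_of_lt_of_le ht.2 hx.2⟩).hasDerivWithinAt)
      have hcg : ContinuousOn g (uIcc 0 x) := by
        rw [uIcc_of_le hx.1]; exact hgc.mono hsub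
      exact hcg.intervalIntegrable
    have hb : ‖∫ t in (0:ℝ)..x, g t‖ ≤ M * |x - 0| := by
      apply intervalIntegral.norm_integral_le_of_norm_le_const
      intro t ht
      rw [uIoc_of_le hx.1] at ht
      exact hM t ⟨ht.1.le, le_trans ht.2 hx.2⟩
    rw [key, hw0, sub_zero] at hb
    calc |w x| ≤ M * |x - 0| := hb
      _ = M * x := by rw [sub_zero, abs_of_nonneg hx.1]
  -- the integrands
  set f : ℝ → ℝ := fun x => a x / x ^ 2 * w x ^ 2 with hfdef
  set h : ℝ → ℝ := fun x => a x * g x ^ 2 with hhdef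
  have hfc : ContinuousOn f (Ioc 0 1) := by
    apply ContinuousOn.mul
    · exact (ha_cont.mono Ioc_subset_Icc_self).div (continuousOn_pow 2)
        (fun x hx => pow_ne_zero 2 (ne_of_gt hx.1))
    · exact (hwc.mono Ioc_subset_Icc_self).pow 2
  have hfnn : ∀ x ∈ Ioc (0:ℝ) 1, 0 ≤ f x := by
    intro x hx
    exact mul_nonneg (div_nonneg (ha_pos x hx).le (sq_nonneg x)) (sq_nonneg _)
  have hfb : ∀ x ∈ Ioc (0:ℝ) 1, ‖f x‖ ≤ A * M ^ 2 := by
    intro x hx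
    have hx0 : 0 < x := hx.1
    rw [Real.norm_eq_abs, abs_of_nonneg (hfnn x hx)]
    have hw2 : w x ^ 2 ≤ (M * x) ^ 2 := by
      have h1 := hwb x (Ioc_subset_Icc_self hx)
      nlinarith [abs_nonneg (w x), sq_abs (w x)]
    have haA : a x ≤ A := le_trans (le_abs_self _) (hA x (Ioc_subset_Icc_self hx))
    have hann := hanng x (Ioc_subset_Icc_self hx)
    have h2 : f x ≤ a x / x ^ 2 * (M * x) ^ 2 :=
      mul_le_mul_of_nonneg_left hw2 (div_nonneg hann (sq_nonneg x))
    calc f x ≤ a x / x ^ 2 * (M * x) ^ 2 := h2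
      _ = a x * M ^ 2 := by field_simp
      _ ≤ A * M ^ 2 := mul_le_mul_of_nonneg_right haA (sq_nonneg M)
  have hfint : IntervalIntegrable f volume 0 1 := by
    rw [intervalIntegrable_iff_integrableOn_Ioc_of_le zero_le_one]
    apply Integrable.mono' (g := fun _ => A * M ^ 2)
    · exact integrableOn_const measure_Ioc_lt_top.ne
    · exact hfc.aestronglyMeasurable measurableSet_Ioc
    · exact (ae_restrict_iff' measurableSet_Ioc).mpr (ae_of_all _ hfb)
  have hhc : ContinuousOn h (Icc 0 1) := ha_cont.mul (hgc.pow 2)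
  have hhint : IntervalIntegrable h volume 0 1 := by
    apply ContinuousOn.intervalIntegrable
    rwa [uIcc_of_le zero_le_one]
  have hhnn : ∀ x ∈ Icc (0:ℝ) 1, 0 ≤ h x := fun x hx =>
    mul_nonneg (hanng x hx) (sq_nonneg _)
  clear_value f h
  set R : ℝ := ∫ x in (0:ℝ)..1, h x with hRdef
  clear_value R
  -- main estimate for each ε
  have main : ∀ ε ∈ Ioc (0:ℝ) 1,
      (∫ x in (0:ℝ)..1, f x) ≤ δ⁻¹ ^ 2 * R + (δ⁻¹ + 1) * (A * M ^ 2) * ε := by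
    intro ε hε
    obtain ⟨hε0, hε1⟩ := hε
    have hsub1 : Icc ε 1 ⊆ Icc 0 1 := Icc_subset_Icc hε0.le le_rfl
    have hsubI : Icc ε 1 ⊆ Ioc 0 1 := fun x hx => ⟨lt_of_lt_of_le hε0 hx.1, hx.2⟩
    set G : ℝ → ℝ := fun x => a x * w x ^ 2 / x with hGdef
    set G' : ℝ → ℝ := fun x =>
      ((a' x * w x ^ 2 + a x * (2 * w x * g x)) * x - a x * w x ^ 2 * 1) / x ^ 2 with hG'def
    set P : ℝ → ℝ := fun x => (a' x * w x ^ 2 + a x * (2 * w x * g x)) / x with hPdef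
    have hGd : ∀ x ∈ Ioo ε 1, HasDerivAt G (G' x) x := by
      intro x hx
      have hx01 : x ∈ Ioc (0:ℝ) 1 := ⟨lt_trans hε0 hx.1, hx.2.le⟩
      have hax : HasDerivAt a (a' x) x := ha_deriv x hx01
      have hwx : HasDerivAt w (g x) x := hwd x ⟨hx01.1, hx.2⟩
      have hw2 : HasDerivAt (fun y => w y ^ 2) (2 * w x * g x) x := by
        have h1 := hwx.pow 2
        norm_num at h1
        try exact h1
        try { convert h1 using 1; ring }
      exact (hax.mul hw2).div (hasDerivAt_id x) (ne_of_gt hx01.1)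
    have hGc : ContinuousOn G (Icc ε 1) := by
      apply ContinuousOn.div ((ha_cont.mono hsub1).mul ((hwc.mono hsub1).pow 2))
        continuousOn_id
      exact fun x hx => ne_of_gt (lt_of_lt_of_le hε0 hx.1)
    have hG'c : ContinuousOn G' (Icc ε 1) := by
      apply ContinuousOn.div _ (continuousOn_pow 2)
        (fun x hx => pow_ne_zero 2 (ne_of_gt (lt_of_lt_of_le hε0 hx.1)))
      apply ContinuousOn.sub
      · apply ContinuousOn.mul _ continuousOn_id
        apply ContinuousOn.add
        · exact (ha'_cont.mono hsubI).mul ((hwc.mono hsub1).pow 2)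
        · exact (ha_cont.mono hsub1).mul
            ((continuousOn_const.mul (hwc.mono hsub1)).mul (hgc.mono hsub1))
      · exact ((ha_cont.mono hsub1).mul ((hwc.mono hsub1).pow 2)).mul continuousOn_const
    have hG'int : IntervalIntegrable G' volume ε 1 := by
      apply ContinuousOn.intervalIntegrable; rwa [uIcc_of_le hε1]
    have hPc : ContinuousOn P (Icc ε 1) := by
      apply ContinuousOn.div _ continuousOn_id
        (fun x hx => ne_of_gt (lt_of_lt_of_le hε0 hx.1))
      apply ContinuousOn.add
      · exact (ha'_cont.mono hsubI).mul ((hwc.mono hsub1).pow 2)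
      · exact (ha_cont.mono hsub1).mul
          ((continuousOn_const.mul (hwc.mono hsub1)).mul (hgc.mono hsub1))
    have hPint : IntervalIntegrable P volume ε 1 := by
      apply ContinuousOn.intervalIntegrable; rwa [uIcc_of_le hε1]
    have hfint' : IntervalIntegrable f volume ε 1 := by
      apply hfint.mono_set
      rw [uIcc_of_le hε1, uIcc_of_le zero_le_one]; exact hsub1
    have hhint' : IntervalIntegrable h volume ε 1 := by
      apply hhint.mono_set
      rw [uIcc_of_le hε1, uIcc_of_le zero_le_one]; exact hsub1
    have hFTC : ∫ x in ε..1, G' x = G 1 - G ε :=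
      intervalIntegral.integral_eq_sub_of_hasDeriv_right_of_le hε1 hGc
        (fun x hx => (hGd x hx).hasDerivWithinAt) hG'int
    have hsplit : ∫ x in ε..1, f x = (∫ x in ε..1, P x) - (G 1 - G ε) := by
      rw [← hFTC, ← intervalIntegral.integral_sub hPint hG'int]
      apply intervalIntegral.integral_congr
      intro x hx
      rw [uIcc_of_le hε1] at hx
      have hx0 : x ≠ 0 := ne_of_gt (lt_of_lt_of_le hε0 hx.1)
      show f x = P x - G' x
      simp only [hfdef, hPdef, hG'def]
      field_simp
      ring
    -- pointwise bound on P
    have hP_ptwise : ∀ x ∈ Icc ε 1, P x ≤ (K + δ) * f x + δ⁻¹ * h x := by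
      intro x hx
      have hx0 : 0 < x := lt_of_lt_of_le hε0 hx.1
      have hxI : x ∈ Ioc (0:ℝ) 1 := hsubI hx
      have hKa' := hKa x hxI
      have hann := hanng x (hsub1 hx)
      have key2 : 2 * (a x * w x * (g x * x))
          ≤ δ * (a x * w x ^ 2) + δ⁻¹ * (a x * (g x * x) ^ 2) := by
        have h2 : 0 ≤ δ⁻¹ * (a x * (δ * w x - g x * x) ^ 2) := by positivity
        have h3 : δ⁻¹ * (a x * (δ * w x - g x * x) ^ 2)
            = δ * (a x * w x ^ 2) - 2 * (a x * w x * (g x * x))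
              + δ⁻¹ * (a x * (g x * x) ^ 2) := by
          field_simp
          ring
        linarith [h3 ▸ h2]
      have h6 : x * a' x * w x ^ 2 ≤ K * a x * w x ^ 2 :=
        mul_le_mul_of_nonneg_right hKa' (sq_nonneg (w x))
      have hnum : (a' x * w x ^ 2 + a x * (2 * w x * g x)) * x
          ≤ (K + δ) * (a x * w x ^ 2) + δ⁻¹ * (a x * g x ^ 2) * x ^ 2 := by
        nlinarith [key2, h6]
      have e1 : P x = (a' x * w x ^ 2 + a x * (2 * w x * g x)) * x / x ^ 2 := by
        simp only [hPdef]; field_simp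
      have hx2 : (x:ℝ) ^ 2 ≠ 0 := pow_ne_zero 2 hx0.ne'
      have e3 : a x / x ^ 2 * x ^ 2 = a x := div_mul_cancel₀ _ hx2
      have e2 : (K + δ) * f x + δ⁻¹ * h x
          = ((K + δ) * (a x * w x ^ 2) + δ⁻¹ * (a x * g x ^ 2) * x ^ 2) / x ^ 2 := by
        simp only [hfdef, hhdef]
        rw [eq_div_iff hx2]
        calc ((K + δ) * (a x / x ^ 2 * w x ^ 2) + δ⁻¹ * (a x * g x ^ 2)) * x ^ 2
            = (K + δ) * (a x / x ^ 2 * x ^ 2 * w x ^ 2) + δ⁻¹ * (a x * g x ^ 2) * x ^ 2 := by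
              ring
          _ = (K + δ) * (a x * w x ^ 2) + δ⁻¹ * (a x * g x ^ 2) * x ^ 2 := by rw [e3]
      rw [e1, e2]
      exact div_le_div_of_nonneg_right hnum (by positivity)
    have hPle : (∫ x in ε..1, P x) ≤ ∫ x in ε..1, ((K + δ) * f x + δ⁻¹ * h x) :=
      intervalIntegral.integral_mono_on hε1 hPint
        ((hfint'.const_mul _).add (hhint'.const_mul _)) hP_ptwise
    have hint_split : (∫ x in ε..1, ((K + δ) * f x + δ⁻¹ * h x))
        = (K + δ) * (∫ x in ε..1, f x) + δ⁻¹ * (∫ x in ε..1, h x) := by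
      rw [intervalIntegral.integral_add (hfint'.const_mul _) (hhint'.const_mul _),
        intervalIntegral.integral_const_mul, intervalIntegral.integral_const_mul]
    have hhR : (∫ x in ε..1, h x) ≤ R := by
      have hadj : (∫ x in (0:ℝ)..ε, h x) + ∫ x in ε..1, h x = R := by
        rw [hRdef]
        apply intervalIntegral.integral_add_adjacent_intervals _ hhint'
        apply hhint.mono_set
        rw [uIcc_of_le hε0.le, uIcc_of_le zero_le_one]
        exact Icc_subset_Icc le_rfl hε1
      have h0ε : 0 ≤ ∫ x in (0:ℝ)..ε, h x := by
        apply intervalIntegral.integral_nonneg hε0.le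
        intro u hu; exact hhnn u ⟨hu.1, le_trans hu.2 hε1⟩
      linarith
    have hG1 : 0 ≤ G 1 := by
      have h1 := hanng 1 (by norm_num)
      simp only [hGdef]
      positivity
    have hGε : G ε ≤ A * M ^ 2 * ε := by
      have h1 : a ε ≤ A := le_trans (le_abs_self _) (hA ε ⟨hε0.le, hε1⟩)
      have h2 : w ε ^ 2 ≤ (M * ε) ^ 2 := by
        have h3 := hwb ε ⟨hε0.le, hε1⟩
        have h4 : |w ε| ^ 2 ≤ (M * ε) ^ 2 := pow_le_pow_left₀ (abs_nonneg _) h3 2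
        rwa [sq_abs] at h4
      have hann := hanng ε ⟨hε0.le, hε1⟩
      simp only [hGdef]
      rw [div_le_iff₀ hε0]
      have e : A * (M * ε) ^ 2 = A * M ^ 2 * ε * ε := by ring
      linarith [mul_le_mul h1 h2 (sq_nonneg (w ε)) hA0]
    set I : ℝ := ∫ x in ε..1, f x with hIdef
    clear_value I
    have hIineq : I ≤ (K + δ) * I + δ⁻¹ * R + A * M ^ 2 * ε := by
      have h1 : δ⁻¹ * (∫ x in ε..1, h x) ≤ δ⁻¹ * R :=
        mul_le_mul_of_nonneg_left hhR (inv_nonneg.mpr hδ.le)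
      have hPle2 : (∫ x in ε..1, P x) ≤ (K + δ) * I + δ⁻¹ * (∫ x in ε..1, h x) := by
        rw [← hint_split]; exact hPle
      linarith [h1, hG1, hGε, hPle2, hsplit]
    have hIbound : I ≤ δ⁻¹ ^ 2 * R + δ⁻¹ * (A * M ^ 2 * ε) := by
      have hKδ : 1 - (K + δ) = δ := by rw [hδdef]; ring
      have hd : δ * I ≤ δ⁻¹ * R + A * M ^ 2 * ε := by
        have e : δ * I = I - K * I - δ * I := by rw [hδdef]; ring
        linarith [hIineq, e]
      have h3 := mul_le_mul_of_nonneg_left hd (inv_nonneg.mpr hδ.le)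
      rw [← mul_assoc, inv_mul_cancel₀ hδne, one_mul] at h3
      calc I ≤ δ⁻¹ * (δ⁻¹ * R + A * M ^ 2 * ε) := h3
        _ = δ⁻¹ ^ 2 * R + δ⁻¹ * (A * M ^ 2 * ε) := by ring
    have hadjf : (∫ x in (0:ℝ)..ε, f x) + I = ∫ x in (0:ℝ)..1, f x := by
      rw [hIdef]
      apply intervalIntegral.integral_add_adjacent_intervals _ hfint'
      apply hfint.mono_set
      rw [uIcc_of_le hε0.le, uIcc_of_le zero_le_one]
      exact Icc_subset_Icc le_rfl hε1
    have h0ε : (∫ x in (0:ℝ)..ε, f x) ≤ A * M ^ 2 * ε := by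
      have hb : ‖∫ x in (0:ℝ)..ε, f x‖ ≤ A * M ^ 2 * |ε - 0| := by
        apply intervalIntegral.norm_integral_le_of_norm_le_const
        intro t ht
        rw [uIoc_of_le hε0.le] at ht
        exact hfb t ⟨ht.1, le_trans ht.2 hε1⟩
      rw [Real.norm_eq_abs, sub_zero, abs_of_nonneg hε0.le] at hb
      linarith [le_abs_self (∫ x in (0:ℝ)..ε, f x)]
    calc (∫ x in (0:ℝ)..1, f x) = (∫ x in (0:ℝ)..ε, f x) + I := hadjf.symm
      _ ≤ A * M ^ 2 * ε + (δ⁻¹ ^ 2 * R + δ⁻¹ * (A * M ^ 2 * ε)) := add_le_add h0ε hIbound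
      _ = δ⁻¹ ^ 2 * R + (δ⁻¹ + 1) * (A * M ^ 2) * ε := by ring
  -- limit ε → 0⁺
  have hlim : (∫ x in (0:ℝ)..1, f x) ≤ δ⁻¹ ^ 2 * R := by
    have ht : Tendsto (fun ε : ℝ => δ⁻¹ ^ 2 * R + (δ⁻¹ + 1) * (A * M ^ 2) * ε)
        (nhdsWithin 0 (Ioi 0)) (nhds (δ⁻¹ ^ 2 * R)) := by
      have hc : Continuous (fun ε : ℝ => δ⁻¹ ^ 2 * R + (δ⁻¹ + 1) * (A * M ^ 2) * ε) :=
        continuous_const.add (continuous_const.mul continuous_id)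
      have h2 := (hc.tendsto 0).mono_left (nhdsWithin_le_nhds (s := Ioi (0:ℝ)))
      simpa using h2
    apply ge_of_tendsto ht
    filter_upwards [Ioc_mem_nhdsGT (one_pos : (0:ℝ) < 1)] with ε hε
    exact main ε hε
  have hRe : (∫ x in (0:ℝ)..1, a x * (deriv w x) ^ 2) = R := by
    rw [hRdef]
    apply intervalIntegral.integral_congr_ae
    have h1 : ∀ᵐ x : ℝ, x ≠ 1 := by
      filter_upwards [compl_mem_ae_iff.mpr Real.volume_singleton] with x hx
      simpa using hx
    filter_upwards [h1] with x hx1 hx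
    rw [uIoc_of_le zero_le_one] at hx
    have hxo : x ∈ Ioo (0:ℝ) 1 := ⟨hx.1, lt_of_le_of_ne hx.2 hx1⟩
    simp only [hhdef]
    rw [hderiv_eq x hxo]
  rw [hRe]
  exact hlim
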